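/- In the monoid S, the right ideal bS ∩ aS is not a finite union of principal right ideals: there is no finite subset F ⊆ S with bS ∩ aS = ⋃_{f ∈ F} fS. In particular, S is not finitely aligned. -/

import Mathlib

/-- The alphabet of the monoid `S`: letters `a`, `b` and `x n`, `y n` for `n : ℤ`. -/
inductive SGen : Type
  | a : SGen
  | b : SGen
  | x : ℤ → SGen
  | y : ℤ → SGen

/-- The defining relations of `S`: `a·b·x n = b·x n` and `a·b·y n = b·y (n+1)` for `n ∈ ℤ`. -/
inductive SRel : FreeMonoid SGen → FreeMonoid SGen → Prop
  | xr (n : ℤ) : SRel (.of .a * .of .b * .of (.x n)) (.of .b * .of (.x n))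
  | yr (n : ℤ) : SRel (.of .a * .of .b * .of (.y n)) (.of .b * .of (.y (n + 1)))

/-- The monoid `S` presented by the generators `SGen` and the relations `SRel`. -/
abbrev S : Type := PresentedMonoid SRel

/-- The images of the generators in `S`. -/
def gen (g : SGen) : S := PresentedMonoid.of SRel g

/-- The principal right ideal `sS` of a monoid. -/
def rIdeal {M : Type*} [Monoid M] (s : M) : Set M := {m | ∃ u, m = s * u}
/-- A left cancellative monoid `M` is finitely aligned if for all `s t : M` the right ideal
`sM ∩ tM` is a finite (possibly empty) union of principal right ideals. -/
def FinitelyAligned (M : Type*) [Monoid M] : Prop :=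
  ∀ s t : M, ∃ F : Finset M, rIdeal s ∩ rIdeal t = ⋃ f ∈ F, rIdeal f

namespace SAux

/-- One step of right-to-left normalization. -/
def step : SGen → List SGen → List SGen
  | .a, .b :: .x n :: t => .b :: .x n :: t
  | .a, .b :: .y n :: t => .b :: .y (n + 1) :: t
  | g, l => g :: l

theorem foldr_step_step (g : SGen) (l X : List SGen) :
    (step g l).foldr step X = step g (l.foldr step X) := by
  match g, l with
  | .a, [] => rfl
  | .a, [.a] => rfl
  | .a, [.b] => rfl
  | .a, [.x n] => rfl
  | .a, [.y n] => rfl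
  | .a, .a :: g2 :: t => rfl
  | .a, .x n :: g2 :: t => rfl
  | .a, .y n :: g2 :: t => rfl
  | .a, .b :: .a :: t => rfl
  | .a, .b :: .b :: t => rfl
  | .a, .b :: .x n :: t => rfl
  | .a, .b :: .y n :: t => rfl
  | .b, l => rfl
  | .x n, l => rfl
  | .y n, l => rfl

/-- Normal form of a word. -/
def nfL (l : List SGen) : List SGen := l.foldr step []

theorem foldr_nfL (l X : List SGen) : l.foldr step X = (nfL l).foldr step X := by
  induction l with
  | nil => rfl
  | cons g t ih =>
      show step g (t.foldr step X) = (step g (nfL t)).foldr step X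
      rw [foldr_step_step, ih]

theorem congr_foldr {w v : FreeMonoid SGen} (h : ConGen.Rel SRel w v) :
    ∀ X : List SGen, w.toList.foldr step X = v.toList.foldr step X := by
  induction h with
  | of x y hxy =>
      cases hxy with
      | xr n => intro X; rfl
      | yr n => intro X; rfl
  | refl _ => intro X; rfl
  | symm _ ih => intro X; exact (ih X).symm
  | trans _ _ ih1 ih2 => intro X; exact (ih1 X).trans (ih2 X)
  | mul _ _ ih1 ih2 =>
      intro X
      simp only [FreeMonoid.toList_mul, List.foldr_append, ih1, ih2]

theorem mk_eq_imp {w v : FreeMonoid SGen}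
    (h : PresentedMonoid.mk SRel w = PresentedMonoid.mk SRel v) :
    ∀ X : List SGen, w.toList.foldr step X = v.toList.foldr step X :=
  congr_foldr (Quotient.exact h)

theorem key (f : S) (hfb : f ∈ rIdeal (gen .b)) (hfa : f ∈ rIdeal (gen .a))
    {n m : ℤ} (hn : gen .b * gen (.x n) ∈ rIdeal f) (hm : gen .b * gen (.x m) ∈ rIdeal f) :
    n = m := by
  obtain ⟨w, rfl⟩ := PresentedMonoid.surjective_mk (rels := SRel) f
  obtain ⟨u, hu⟩ := hn
  obtain ⟨v, hv⟩ := hm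
  obtain ⟨wu, rfl⟩ := PresentedMonoid.surjective_mk (rels := SRel) u
  obtain ⟨wv, rfl⟩ := PresentedMonoid.surjective_mk (rels := SRel) v
  obtain ⟨b', hb⟩ := hfb
  obtain ⟨a', ha⟩ := hfa
  obtain ⟨wb, rfl⟩ := PresentedMonoid.surjective_mk (rels := SRel) b'
  obtain ⟨wa, rfl⟩ := PresentedMonoid.surjective_mk (rels := SRel) a'
  -- turn everything into list equations about normal forms
  have Hn := mk_eq_imp (w := FreeMonoid.of .b * FreeMonoid.of (.x n)) (v := w * wu) hu
  have Hm := mk_eq_imp (w := FreeMonoid.of .b * FreeMonoid.of (.x m)) (v := w * wv) hv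
  have Hb : nfL w.toList = SGen.b :: nfL wb.toList := by
    have := mk_eq_imp (w := w) (v := FreeMonoid.of .b * wb) hb []
    simp [nfL] at this; exact this
  have Ha : nfL w.toList = step .a (nfL wa.toList) := by
    have := mk_eq_imp (w := w) (v := FreeMonoid.of .a * wa) ha []
    simpa [nfL] using this
  have En : [SGen.b, SGen.x n]
      = List.foldr step (nfL (FreeMonoid.toList wu)) (nfL (FreeMonoid.toList w)) := by
    have h0 := Hn []
    rw [show FreeMonoid.toList (w * wu) = FreeMonoid.toList w ++ FreeMonoid.toList wu from rfl,
      List.foldr_append, foldr_nfL (FreeMonoid.toList w)] at h0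
    exact h0
  have Em : [SGen.b, SGen.x m]
      = List.foldr step (nfL (FreeMonoid.toList wv)) (nfL (FreeMonoid.toList w)) := by
    have h0 := Hm []
    rw [show FreeMonoid.toList (w * wv) = FreeMonoid.toList w ++ FreeMonoid.toList wv from rfl,
      List.foldr_append, foldr_nfL (FreeMonoid.toList w)] at h0
    exact h0
  -- analyze the normal form of w
  rcases hA : nfL wa.toList with _ | ⟨g1, _ | ⟨g2, t⟩⟩
  · rw [hA] at Ha; rw [Ha] at Hb; simp [step] at Hb
  · rw [hA] at Ha; rw [Ha] at Hb
    cases g1 <;> simp [step] at Hb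
  · rw [hA] at Ha
    cases g1 <;> cases g2 <;>
      first
      | (rw [Ha] at Hb; simp [step] at Hb)
      | skip
    case b.x k =>
      rw [Ha] at En Em
      simp only [step, List.foldr_cons] at En Em
      injection En with _ En'; injection Em with _ Em'
      injection En' with hxn _; injection Em' with hxm _
      injection hxn with h1; injection hxm with h2
      omega
    case b.y k =>
      rw [Ha] at En
      simp only [step, List.foldr_cons] at En
      injection En with _ En'
      injection En' with hxy _
      exact absurd hxy (by simp)

end SAux

open SAux in
/-- In `S`, the right ideal `bS ∩ aS` is not a finite union of principal right ideals;
in particular, `S` is not finitely aligned. -/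
theorem S_not_finitelyAligned :
    (¬ ∃ F : Finset S, rIdeal (gen .b) ∩ rIdeal (gen .a) = ⋃ f ∈ F, rIdeal f) ∧
    ¬ FinitelyAligned S := by
  have main : ¬ ∃ F : Finset S, rIdeal (gen .b) ∩ rIdeal (gen .a) = ⋃ f ∈ F, rIdeal f := by
    rintro ⟨F, hF⟩
    have hmem : ∀ n : ℤ, gen .b * gen (.x n) ∈ rIdeal (gen .b) ∩ rIdeal (gen .a) := by
      intro n
      refine ⟨⟨gen (.x n), rfl⟩, ⟨gen .b * gen (.x n), ?_⟩⟩
      show PresentedMonoid.mk SRel (.of .b * .of (.x n)) =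
        PresentedMonoid.mk SRel (.of .a * (.of .b * .of (.x n)))
      exact Quotient.sound (ConGen.Rel.symm (ConGen.Rel.of _ _ (SRel.xr n)))
    have hch : ∀ n : ℤ, ∃ f : S, f ∈ F ∧ gen .b * gen (.x n) ∈ rIdeal f := by
      intro n
      have h := hmem n
      rw [hF] at h
      simpa using h
    choose φ hφF hφm using hch
    obtain ⟨n, m, hne, heq⟩ :=
      Finite.exists_ne_map_eq_of_infinite (fun n : ℤ => (⟨φ n, hφF n⟩ : {f // f ∈ F}))
    have h1 : φ n = φ m := congrArg Subtype.val heq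
    have hfmem : φ n ∈ rIdeal (gen .b) ∩ rIdeal (gen .a) := by
      rw [hF]
      exact Set.mem_biUnion (hφF n) ⟨1, (mul_one _).symm⟩
    exact hne (key (φ n) hfmem.1 hfmem.2 (hφm n) (h1 ▸ hφm m))
  exact ⟨main, fun h => main (h (gen .b) (gen .a))⟩
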